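/- Let H be a Hopf algebra over k, (V,Y,1,s) an H-module vertex algebra, and M any left H-module. Then (V⊗M, Y_{V⊗M}, s⊗Id), where Y_{V⊗M}(a#h,z)(b⊗m) = Σ Y(a,z)(h_1 b) ⊗ h_2 m for a#h ∈ V#H, b ∈ V, m ∈ M, is a left module over the S-local vertex algebra V#H; in particular it satisfies the module S-locality: for all a#h, b#g ∈ V#H there exists n with (z−w)^n Y_{V⊗M}(a#h,z)Y_{V⊗M}(b#g,w) = (z−w)^n Σ Y_{V⊗M}(h_1 b#1,w)Y_{V⊗M}(a#h_2 g,z). -/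
import Mathlib


open scoped TensorProduct DirectSum

namespace HopfVA

/-- Generalized binomial coefficient `C(r, j)` for an integer `r` (exact division). -/
def ibinom (r : ℤ) (j : ℕ) : ℤ := (∏ i ∈ Finset.range j, (r - (i : ℤ))) / (j.factorial : ℤ)

/-- `(-1)^q` for an integer exponent `q`. -/
def negOnePow (q : ℤ) : ℤ := if Even q then 1 else -1

section Core

variable {k : Type*} [CommRing k] {V : Type*} [AddCommGroup V] [Module k V]

/-- If `f p q` is the coefficient of `z^p w^q` of a two-variable formal distribution,
then `zwMul n f p q` is the coefficient of `z^p w^q` of `(z-w)^n` times that distribution. -/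
def zwMul (n : ℕ) (f : ℤ → ℤ → V) : ℤ → ℤ → V := fun p q =>
  ∑ i ∈ Finset.range (n + 1),
    ((-1 : ℤ) ^ i * (n.choose i : ℤ)) • f (p - ((n : ℤ) - (i : ℤ))) (q - (i : ℤ))

/-- The data of a state-field correspondence on a pointed vector space:
`Y a n b` is the `n`-th product `a_n b` (so that `Y(a,z)b = ∑ (a_n b) z^{-n-1}`),
`vac` is the vacuum vector and `T` is the translation operator. -/
structure VAData (k V : Type*) [CommRing k] [AddCommGroup V] [Module k V] where
  Y : V →ₗ[k] ℤ → Module.End k V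
  vac : V
  T : Module.End k V

namespace VAData

variable (F : VAData k V)

/-- coefficient of `z^p w^q` in `Y(a,z)Y(b,w)c`. -/
def prodZW (a b c : V) : ℤ → ℤ → V := fun p q => F.Y a (-p - 1) (F.Y b (-q - 1) c)

/-- coefficient of `z^p w^q` in `Y(b,w)Y(a,z)c`. -/
def prodWZ (a b c : V) : ℤ → ℤ → V := fun p q => F.Y b (-q - 1) (F.Y a (-p - 1) c)

/-- coefficient of `z^p w^q` in `i_{z,w} Y(a,z-w)Y(b,-w)c`. -/
noncomputable def compLHS (a b c : V) : ℤ → ℤ → V := fun p q =>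
  negOnePow q •
    ∑ᶠ j : ℕ, ibinom (p + (j : ℤ)) j • F.Y a (-p - 1 - (j : ℤ)) (F.Y b ((j : ℤ) - 1 - q) c)

/-- Truncated (at `j < J`) version of `compLHS`, for `h`-adic statements. -/
def compLHStr (J : ℕ) (a b c : V) : ℤ → ℤ → V := fun p q =>
  negOnePow q •
    ∑ j ∈ Finset.range J, ibinom (p + (j : ℤ)) j • F.Y a (-p - 1 - (j : ℤ)) (F.Y b ((j : ℤ) - 1 - q) c)

/-- coefficient of `z^p w^q` in `Y(Y(a,z)b,-w)c`. -/
def compRHS (a b c : V) : ℤ → ℤ → V := fun p q =>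
  negOnePow q • F.Y (F.Y a (-p - 1) b) (-q - 1) c

/-- The axioms of a state-field correspondence: truncation, the vacuum axioms
`Y(1,z)a = a`, `Y(a,z)1 = a + (Ta)z + ⋯ ∈ V[[z]]`, and translation covariance
`[T, Y(a,z)] = Y(Ta,z) = ∂_z Y(a,z)`. -/
def IsStateField : Prop :=
  (∀ a b : V, ∃ N : ℤ, ∀ n : ℤ, N ≤ n → F.Y a n b = 0) ∧
  (∀ (a : V) (n : ℤ), F.Y F.vac n a = if n = -1 then a else 0) ∧
  (∀ (a : V) (n : ℤ), 0 ≤ n → F.Y a n F.vac = 0) ∧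
  (∀ a : V, F.Y a (-1) F.vac = a) ∧
  (∀ a : V, F.Y a (-2) F.vac = F.T a) ∧
  (∀ (a b : V) (n : ℤ), F.Y (F.T a) n b = F.T (F.Y a n b) - F.Y a n (F.T b)) ∧
  (∀ (a b : V) (n : ℤ), F.Y (F.T a) n b = (-n : ℤ) • F.Y a (n - 1) b)

/-- The associativity relation
`(z-w)^N i_{z,w} Y(a,z-w)Y(b,-w)c = (z-w)^N Y(Y(a,z)b,-w)c`. -/
def IsAssocFA : Prop := ∀ a b c : V, ∃ N : ℕ, ∀ p q : ℤ,
  zwMul N (F.compLHS a b c) p q = zwMul N (F.compRHS a b c) p q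

/-- A field algebra is a state-field correspondence satisfying associativity. -/
def IsFieldAlgebra : Prop := F.IsStateField ∧ F.IsAssocFA

/-- `(z-w)^n [Y(a,z), Y(b,w)] = 0`. -/
def IsLocalPair (a b : V) : Prop :=
  ∃ n : ℕ, ∀ (c : V) (p q : ℤ), zwMul n (F.prodZW a b c) p q = zwMul n (F.prodWZ a b c) p q

/-- A vertex algebra is a field algebra all of whose pairs of fields are local. -/
def IsVertexAlgebra : Prop := F.IsFieldAlgebra ∧ ∀ a b : V, F.IsLocalPair a b

/-- `(z-w)^n Y(a,z)Y(b,w) = (z-w)^n ∑ᵢ Y(bⁱ,w)Y(aⁱ,z)`. -/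
def IsSLocalPair (a b : V) : Prop :=
  ∃ (n m : ℕ) (A B : Fin m → V), ∀ (c : V) (p q : ℤ),
    zwMul n (F.prodZW a b c) p q = ∑ i, zwMul n (F.prodWZ (A i) (B i) c) p q

/-- An `S`-local vertex algebra is a field algebra all of whose pairs of fields
are `S`-local. -/
def IsSLocalVA : Prop := F.IsFieldAlgebra ∧ ∀ a b : V, F.IsSLocalPair a b

end VAData

/-- Data of a module over a field algebra: the module fields `Y^M` and translation `sM`. -/
structure VModData (k V M : Type*) [CommRing k] [AddCommGroup V] [Module k V]
    [AddCommGroup M] [Module k M] where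
  YM : V →ₗ[k] ℤ → Module.End k M
  sM : Module.End k M

namespace VModData

variable {M : Type*} [AddCommGroup M] [Module k M]

/-- coefficient of `z^p w^q` in `Y^M(a,z)Y^M(b,w)x`. -/
def mprodZW (Mo : VModData k V M) (a b : V) (x : M) : ℤ → ℤ → M := fun p q =>
  Mo.YM a (-p - 1) (Mo.YM b (-q - 1) x)

/-- coefficient of `z^p w^q` in `Y^M(b,w)Y^M(a,z)x`. -/
def mprodWZ (Mo : VModData k V M) (a b : V) (x : M) : ℤ → ℤ → M := fun p q =>
  Mo.YM b (-q - 1) (Mo.YM a (-p - 1) x)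

/-- coefficient of `z^p w^q` in `i_{z,w} Y^M(a,z-w)Y^M(b,-w)x`. -/
noncomputable def mcompLHS (Mo : VModData k V M) (a b : V) (x : M) : ℤ → ℤ → M := fun p q =>
  negOnePow q •
    ∑ᶠ j : ℕ, ibinom (p + (j : ℤ)) j • Mo.YM a (-p - 1 - (j : ℤ)) (Mo.YM b ((j : ℤ) - 1 - q) x)

/-- coefficient of `z^p w^q` in `Y^M(Y(a,z)b,-w)x`. -/
def mcompRHS (F : VAData k V) (Mo : VModData k V M) (a b : V) (x : M) : ℤ → ℤ → M := fun p q =>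
  negOnePow q • Mo.YM (F.Y a (-p - 1) b) (-q - 1) x

/-- `M` is a left module over the field algebra `F`: truncation, vacuum, translation
invariance and the associativity axiom. -/
def IsModule (F : VAData k V) (Mo : VModData k V M) : Prop :=
  (∀ (a : V) (x : M), ∃ N : ℤ, ∀ n : ℤ, N ≤ n → Mo.YM a n x = 0) ∧
  (∀ (x : M) (n : ℤ), Mo.YM F.vac n x = if n = -1 then x else 0) ∧
  (∀ (a : V) (x : M) (n : ℤ),
      Mo.sM (Mo.YM a n x) - Mo.YM a n (Mo.sM x) = (-n : ℤ) • Mo.YM a (n - 1) x) ∧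
  (∀ (a b : V) (x : M), ∃ N : ℕ, ∀ p q : ℤ,
      zwMul N (mcompLHS Mo a b x) p q = zwMul N (mcompRHS F Mo a b x) p q)

/-- Locality of the module fields `Y^M(a,z)`, `Y^M(b,w)`. -/
def IsLocalModPair (Mo : VModData k V M) (a b : V) : Prop :=
  ∃ n : ℕ, ∀ (x : M) (p q : ℤ),
    zwMul n (mprodZW Mo a b x) p q = zwMul n (mprodWZ Mo a b x) p q

/-- `S`-locality of the module fields. -/
def IsSLocalModPair (Mo : VModData k V M) (a b : V) : Prop :=
  ∃ (n m : ℕ) (A B : Fin m → V), ∀ (x : M) (p q : ℤ),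
    zwMul n (mprodZW Mo a b x) p q = ∑ i, zwMul n (mprodWZ Mo (A i) (B i) x) p q

end VModData

/-- The `f`-product `a_(f) b = Res_z f(z) Y(a,z) b`, where `f n` is the coefficient
of `z^n` in `f`. -/
noncomputable def fProduct (F : VAData k V) (f : ℤ → k) (a b : V) : V :=
  ∑ᶠ n : ℤ, f n • F.Y a n b

/-- Coefficients of the formal derivative `∂_z f`. -/
def derivCoef (f : ℤ → k) : ℤ → k := fun n => ((n : ℤ) + 1 : ℤ) • f (n + 1)

/-- The subspace `V_(g) V` spanned by all products `a_(g) b` with `g = ∂_z f`. -/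
noncomputable def gSpan (F : VAData k V) (f : ℤ → k) : Submodule k V :=
  Submodule.span k {x : V | ∃ a b : V, x = fProduct F (derivCoef f) a b}

/-- `x ≡ y mod h^M`, where `h = r`. -/
def ModH (r : k) (M : ℕ) (x y : V) : Prop := ∃ v : V, x - y = r ^ M • v

/-- An automorphism of the (state-field data of a) vertex algebra `F`. -/
def IsVAAut (F : VAData k V) (φ : V ≃ₗ[k] V) : Prop :=
  φ F.vac = F.vac ∧ (∀ v : V, φ (F.T v) = F.T (φ v)) ∧
  ∀ (a b : V) (n : ℤ), φ (F.Y a n b) = F.Y (φ a) n (φ b)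

end Core

/-- The coefficients of `f(z) = z⁻¹`. -/
def zinvCoef (k : Type*) [CommRing k] : ℤ → k := fun n => if n = -1 then 1 else 0

/-- The coefficients of `f(z) = c·e^{cz}/(e^{cz}-1)
  = z⁻¹ + c + ∑_{m≥1} B_m c^m z^{m-1}/m!` (Bernoulli numbers `B_m`). -/
noncomputable def berCoef {k : Type*} [Field k] [CharZero k] (c : k) : ℤ → k := fun n =>
  if n < -1 then 0
  else ((bernoulli (n + 1).toNat : ℚ) • (c ^ (n + 1).toNat)) / ((n + 1).toNat.factorial : k)
        + (if n = 0 then c else 0)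

/-- `f(z) = z⁻¹` or `f(z) = c·e^{cz}/(e^{cz}-1)` with `c ≠ 0`. -/
def AdmissibleF {k : Type*} [Field k] [CharZero k] (f : ℤ → k) : Prop :=
  f = zinvCoef k ∨ ∃ c : k, c ≠ 0 ∧ f = berCoef c

section HopfDefs

variable {k : Type*} [CommRing k] {V : Type*} [AddCommGroup V] [Module k V]
variable (H : Type*) [Ring H] [HopfAlgebra k H]

/-- `V` is an `H`-module field algebra: `h·1 = ε(h)1`, `h(Ta) = T(ha)` and
`h(aₙb) = ∑ (h₁a)ₙ(h₂b)` (the last condition quantified over all finite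
representations of `Δ(h)`). -/
def IsHModuleFA [Module H V] [IsScalarTower k H V] (F : VAData k V) : Prop :=
  (∀ h : H, h • F.vac = (Coalgebra.counit (R := k) h) • F.vac) ∧
  (∀ (h : H) (a : V), h • (F.T a : V) = F.T (h • a)) ∧
  (∀ (h : H) (a b : V) (n : ℤ) (m : ℕ) (h1 h2 : Fin m → H),
      Coalgebra.comul (R := k) h = ∑ i, h1 i ⊗ₜ[k] h2 i →
      h • (F.Y a n b : V) = ∑ i, F.Y (h1 i • a) n (h2 i • b))

/-- The smash product structure `V # H` on `V ⊗ H`: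
`Y(a#h,z)(b#g) = ∑ Y(a,z)(h₁b) # h₂g`, vacuum `1#1`, translation `T#1`. -/
def SmashChar [Module H V] [IsScalarTower k H V] (F : VAData k V)
    (FS : VAData k (V ⊗[k] H)) : Prop :=
  (∀ (a b : V) (h g : H) (n : ℤ) (m : ℕ) (h1 h2 : Fin m → H),
      Coalgebra.comul (R := k) h = ∑ i, h1 i ⊗ₜ[k] h2 i →
      FS.Y (a ⊗ₜ[k] h) n (b ⊗ₜ[k] g) = ∑ i, (F.Y a n (h1 i • b) : V) ⊗ₜ[k] (h2 i * g)) ∧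
  (FS.vac = F.vac ⊗ₜ[k] (1 : H)) ∧
  (∀ (a : V) (h : H), FS.T (a ⊗ₜ[k] h) = (F.T a : V) ⊗ₜ[k] h)

end HopfDefs

/-- The fixed point subspace `V^H = {v | h v = ε(h) v for all h}`. -/
def hFixed (k V H : Type*) [CommRing k] [AddCommGroup V] [Module k V]
    [Ring H] [HopfAlgebra k H] [Module H V] [IsScalarTower k H V]
    [SMulCommClass k H V] : Submodule k V where
  carrier := {v : V | ∀ h : H, h • v = (Coalgebra.counit (R := k) h) • v}
  add_mem' := by
    intro a b ha hb h
    rw [smul_add, ha h, hb h, ← smul_add]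
  zero_mem' := by
    intro h
    simp
  smul_mem' := by
    intro c v hv h
    rw [← smul_comm c h v, hv h, smul_smul, smul_smul, mul_comm]

end HopfVA

namespace HopfVA

section AuxZW

variable {k : Type*} [CommRing k] {V : Type*} [AddCommGroup V] [Module k V]
  {W : Type*} [AddCommGroup W] [Module k W]

theorem zwMul_congr {n : ℕ} {f g : ℤ → ℤ → V} (h : ∀ p q, f p q = g p q) (p q : ℤ) :
    zwMul n f p q = zwMul n g p q := by
  have : f = g := funext fun p => funext (h p)
  rw [this]

theorem zwMul_zero_fn (n : ℕ) (p q : ℤ) :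
    zwMul n (fun _ _ => (0 : V)) p q = 0 := by
  simp [zwMul]

theorem zwMul_succ (n : ℕ) (f : ℤ → ℤ → V) (p q : ℤ) :
    zwMul (n + 1) f p q = zwMul n f (p - 1) q - zwMul n f p (q - 1) := by
  have fcongr : ∀ (c c' a a' b b' : ℤ), c = c' → a = a' → b = b' → c • f a b = c' • f a' b' := by
    rintro c c' a a' b b' rfl rfl rfl; rfl
  unfold zwMul
  rw [Finset.sum_range_succ' _ (n + 1)]
  rw [Finset.sum_range_succ'
    (fun i => ((-1 : ℤ) ^ i * ((n.choose i : ℕ) : ℤ)) • f (p - 1 - ((n : ℤ) - (i : ℤ))) (q - (i : ℤ))) n]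
  have hpascal : ∀ i ∈ Finset.range (n + 1),
      ((-1 : ℤ) ^ (i + 1) * (((n + 1).choose (i + 1) : ℕ) : ℤ)) •
          f (p - (((n + 1 : ℕ) : ℤ) - ((i + 1 : ℕ) : ℤ))) (q - ((i + 1 : ℕ) : ℤ))
        = ((-1 : ℤ) ^ (i + 1) * ((n.choose (i + 1) : ℕ) : ℤ)) •
            f (p - 1 - ((n : ℤ) - ((i + 1 : ℕ) : ℤ))) (q - ((i + 1 : ℕ) : ℤ))
          - ((-1 : ℤ) ^ i * ((n.choose i : ℕ) : ℤ)) •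
              f (p - ((n : ℤ) - (i : ℤ))) (q - 1 - (i : ℤ)) := by
    intro i _
    have hc : (((n + 1).choose (i + 1) : ℕ) : ℤ)
        = ((n.choose i : ℕ) : ℤ) + ((n.choose (i + 1) : ℕ) : ℤ) := by
      exact_mod_cast Nat.choose_succ_succ n i
    rw [hc, mul_add, add_smul]
    rw [fcongr ((-1 : ℤ) ^ (i + 1) * ((n.choose i : ℕ) : ℤ))
      (-((-1 : ℤ) ^ i * ((n.choose i : ℕ) : ℤ))) _ (p - ((n : ℤ) - (i : ℤ))) _
      (q - 1 - (i : ℤ)) (by ring) (by push_cast; ring) (by push_cast; ring)]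
    rw [fcongr ((-1 : ℤ) ^ (i + 1) * ((n.choose (i + 1) : ℕ) : ℤ))
      ((-1 : ℤ) ^ (i + 1) * ((n.choose (i + 1) : ℕ) : ℤ)) _
      (p - 1 - ((n : ℤ) - ((i + 1 : ℕ) : ℤ))) _ (q - ((i + 1 : ℕ) : ℤ)) rfl
      (by push_cast; ring) rfl]
    rw [neg_smul]
    abel
  rw [Finset.sum_congr rfl hpascal, Finset.sum_sub_distrib, Finset.sum_range_succ,
    Nat.choose_succ_self]
  simp only [Nat.cast_zero, mul_zero, zero_smul, add_zero]
  rw [fcongr ((-1 : ℤ) ^ 0 * (((n + 1).choose 0 : ℕ) : ℤ))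
    ((-1 : ℤ) ^ 0 * ((n.choose 0 : ℕ) : ℤ)) (p - (((n + 1 : ℕ) : ℤ) - 0))
    (p - 1 - ((n : ℤ) - 0)) (q - 0) (q - 0) (by simp) (by push_cast; ring) rfl]
  abel

theorem zwMul_le {N n : ℕ} (hle : n ≤ N) {f g : ℤ → ℤ → V}
    (h : ∀ p q, zwMul n f p q = zwMul n g p q) : ∀ p q, zwMul N f p q = zwMul N g p q := by
  obtain ⟨d, rfl⟩ := Nat.exists_eq_add_of_le hle
  clear hle
  induction d with
  | zero => exact h
  | succ d ih =>
    intro p q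
    rw [show n + (d + 1) = (n + d) + 1 from rfl, zwMul_succ, zwMul_succ, ih, ih]

theorem zwMul_map (φ : V →ₗ[k] W) (n : ℕ) (f : ℤ → ℤ → V) (p q : ℤ) :
    zwMul n (fun p q => φ (f p q)) p q = φ (zwMul n f p q) := by
  unfold zwMul
  rw [map_sum]
  exact Finset.sum_congr rfl fun i _ => (map_zsmul φ _ _).symm

theorem zwMul_add (n : ℕ) (f g : ℤ → ℤ → V) (p q : ℤ) :
    zwMul n (fun p q => f p q + g p q) p q = zwMul n f p q + zwMul n g p q := by
  unfold zwMul
  rw [← Finset.sum_add_distrib]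
  exact Finset.sum_congr rfl fun i _ => smul_add _ _ _

theorem zwMul_sum {ι : Type*} (s : Finset ι) (n : ℕ) (f : ι → ℤ → ℤ → V) (p q : ℤ) :
    zwMul n (fun p q => ∑ i ∈ s, f i p q) p q = ∑ i ∈ s, zwMul n (f i) p q := by
  unfold zwMul
  simp only [Finset.smul_sum]
  rw [Finset.sum_comm]

theorem exists_fin_repr {A B : Type*} [AddCommGroup A] [Module k A] [AddCommGroup B] [Module k B]
    (t : A ⊗[k] B) : ∃ (m : ℕ) (x : Fin m → A) (y : Fin m → B), t = ∑ i, x i ⊗ₜ[k] y i := by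
  induction t using TensorProduct.induction_on with
  | zero => exact ⟨0, ![], ![], by simp⟩
  | tmul a b => exact ⟨1, ![a], ![b], by simp⟩
  | add u v hu hv =>
    obtain ⟨m1, x1, y1, rfl⟩ := hu
    obtain ⟨m2, x2, y2, rfl⟩ := hv
    refine ⟨m1 + m2, Fin.append x1 x2, Fin.append y1 y2, ?_⟩
    rw [Fin.sum_univ_add]
    simp [Fin.append_left, Fin.append_right]

end AuxZW

section MainConstr
set_option linter.unusedSectionVars false

variable {k : Type*} [Field k] [CharZero k]
    {V : Type*} [AddCommGroup V] [Module k V]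
    {H : Type*} [Ring H] [HopfAlgebra k H]
    [Module H V] [IsScalarTower k H V] [SMulCommClass k H V]
    {M : Type*} [AddCommGroup M] [Module k M]
    [Module H M] [IsScalarTower k H M] [SMulCommClass k H M]

/-- The `k`-linear map `h ↦ h • w`. -/
def smulMap (W : Type*) [AddCommGroup W] [Module k W] [Module H W] [IsScalarTower k H W]
    (w : W) : H →ₗ[k] W where
  toFun h := h • w
  map_add' x y := add_smul x y w
  map_smul' c x := smul_assoc c x w

/-- `Θ_{a,n,b,g}(x ⊗ y) = Y(a)_n (x•b) ⊗ (y*g)`. -/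
noncomputable def ThetaMap (F : VAData k V) (a : V) (n : ℤ) (b : V) (g : H) :
    H ⊗[k] H →ₗ[k] V ⊗[k] H :=
  TensorProduct.map ((F.Y a n : Module.End k V) ∘ₗ smulMap V b) (LinearMap.mulRight k g)

theorem theta_apply (F : VAData k V) (a : V) (n : ℤ) (b : V) (g : H) (x y : H) :
    ThetaMap F a n b g (x ⊗ₜ[k] y) = (F.Y a n (x • b)) ⊗ₜ[k] (y * g) := by
  simp [ThetaMap, smulMap]

variable (F : VAData k V) (FS : VAData k (V ⊗[k] H))

theorem FSY_tmul (hFS : SmashChar H F FS)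
    (a : V) (h : H) (n : ℤ) (b : V) (g : H) :
    FS.Y (a ⊗ₜ[k] h) n (b ⊗ₜ[k] g) = ThetaMap F a n b g (Coalgebra.comul (R := k) h) := by
  obtain ⟨m, h1, h2, hrep⟩ := exists_fin_repr (Coalgebra.comul (R := k) h)
  rw [hFS.1 a b h g n m h1 h2 hrep, hrep, map_sum]
  exact Finset.sum_congr rfl fun i _ => (theta_apply F a n b g (h1 i) (h2 i)).symm

theorem comul_one' : Coalgebra.comul (R := k) (1 : H) = (1 : H) ⊗ₜ[k] (1 : H) := by
  have := map_one (Bialgebra.comulAlgHom k H)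
  rwa [Algebra.TensorProduct.one_def] at this

theorem comul_mul' (x y : H) : Coalgebra.comul (R := k) (x * y)
    = Coalgebra.comul (R := k) x * Coalgebra.comul (R := k) y :=
  map_mul (Bialgebra.comulAlgHom k H) x y

/-- the multiplication-action map `(V⊗H)⊗M → V⊗M`. -/
noncomputable def piMap : ((V ⊗[k] H) ⊗[k] M) →ₗ[k] V ⊗[k] M :=
  (TensorProduct.map LinearMap.id (TensorProduct.lift
      (LinearMap.mk₂ k (fun (h : H) (x : M) => h • x) (fun x y m => add_smul x y m)
        (fun c h m => smul_assoc c h m) (fun h x y => smul_add h x y)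
        (fun c h x => smul_comm h c x)))) ∘ₗ
    (TensorProduct.assoc k V H M).toLinearMap

theorem piMap_tmul (c : V) (f : H) (x : M) :
    piMap ((c ⊗ₜ[k] f) ⊗ₜ[k] x) = c ⊗ₜ[k] (f • x) := by
  simp [piMap]

/-- `Φ_{m₀} : V⊗H → V⊗M`, `c⊗f ↦ c⊗(f•m₀)`. -/
noncomputable def PhiMap (m0 : M) : V ⊗[k] H →ₗ[k] V ⊗[k] M :=
  TensorProduct.map LinearMap.id (smulMap M m0)

theorem phi_tmul (m0 : M) (c : V) (f : H) :
    PhiMap (V := V) m0 (c ⊗ₜ[k] f) = c ⊗ₜ[k] (f • m0) := by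
  simp [PhiMap, smulMap]

theorem simple_as_phi (b : V) (x : M) :
    (b ⊗ₜ[k] x : V ⊗[k] M) = PhiMap (V := V) (H := H) x (b ⊗ₜ[k] (1 : H)) := by
  rw [phi_tmul, one_smul]

/-- the state-field data on `V ⊗ M`. -/
noncomputable def YMmap : (V ⊗[k] H) →ₗ[k] ℤ → Module.End k (V ⊗[k] M) where
  toFun u := fun n => (piMap ∘ₗ
    TensorProduct.map ((FS.Y u n) ∘ₗ ((TensorProduct.mk k V H).flip 1)) LinearMap.id)
  map_add' u v := by
    funext n
    refine TensorProduct.ext' fun b x => ?_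
    simp [map_add, TensorProduct.add_tmul]
  map_smul' c u := by
    funext n
    refine TensorProduct.ext' fun b x => ?_
    have h1 : FS.Y (c • u) n = c • FS.Y u n := by rw [map_smul]; rfl
    simp [h1, ← TensorProduct.smul_tmul', map_smul]

theorem YM_tmul (u : V ⊗[k] H) (n : ℤ) (b : V) (x : M) :
    YMmap (M := M) FS u n (b ⊗ₜ[k] x) = piMap ((FS.Y u n (b ⊗ₜ[k] (1 : H))) ⊗ₜ[k] x) := by
  simp [YMmap]

/-- The module data on `V ⊗ M`. -/
noncomputable def MoD : VModData k (V ⊗[k] H) (V ⊗[k] M) :=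
  ⟨YMmap FS, TensorProduct.map F.T LinearMap.id⟩

theorem MoD_YM : (MoD (M := M) F FS).YM = YMmap FS := rfl

theorem MoD_sM (b : V) (x : M) :
    (MoD (M := M) F FS).sM (b ⊗ₜ[k] x) = (F.T b) ⊗ₜ[k] x := by
  simp [MoD]

theorem FSY_mulRight (hFS : SmashChar H F FS) (u : V ⊗[k] H) (n : ℤ) (b : V) (g : H) :
    FS.Y u n (b ⊗ₜ[k] g) =
      TensorProduct.map LinearMap.id (LinearMap.mulRight k g) (FS.Y u n (b ⊗ₜ[k] (1 : H))) := by
  induction u using TensorProduct.induction_on with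
  | zero => simp [map_zero]
  | tmul a h =>
    rw [FSY_tmul F FS hFS, FSY_tmul F FS hFS]
    induction (Coalgebra.comul (R := k) h) using TensorProduct.induction_on with
    | zero => simp
    | tmul x y => simp [theta_apply, mul_assoc]
    | add s t hs ht => simp only [map_add, hs, ht]
  | add u v hu hv =>
    have h1 : FS.Y (u + v) n = FS.Y u n + FS.Y v n := by rw [map_add]; rfl
    simp only [h1, LinearMap.add_apply, map_add, hu, hv]

theorem YM_phi (hFS : SmashChar H F FS) (m0 : M) (u : V ⊗[k] H) (n : ℤ) (w : V ⊗[k] H) :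
    YMmap (M := M) FS u n (PhiMap (V := V) m0 w) = PhiMap (V := V) m0 (FS.Y u n w) := by
  induction w using TensorProduct.induction_on with
  | zero => simp
  | tmul b g =>
    rw [phi_tmul, YM_tmul]
    conv_rhs => rw [FSY_mulRight F FS hFS]
    generalize FS.Y u n (b ⊗ₜ[k] (1 : H)) = w'
    induction w' using TensorProduct.induction_on with
    | zero => simp
    | tmul c f => simp [piMap_tmul, phi_tmul, mul_smul]
    | add s t hs ht => simp only [map_add, TensorProduct.add_tmul, hs, ht]
  | add w1 w2 h1 h2 => simp only [map_add, h1, h2]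

theorem sM_phi (hFS : SmashChar H F FS) (m0 : M) (w : V ⊗[k] H) :
    (MoD (M := M) F FS).sM (PhiMap (V := V) m0 w) = PhiMap (V := V) m0 (FS.T w) := by
  induction w using TensorProduct.induction_on with
  | zero => simp
  | tmul c f => rw [phi_tmul, hFS.2.2 c f]; simp [MoD, phi_tmul]
  | add w1 w2 h1 h2 => simp only [map_add, h1, h2]

theorem YM_trunc (hFS : SmashChar H F FS)
    (htr : ∀ a b : V ⊗[k] H, ∃ N : ℤ, ∀ n : ℤ, N ≤ n → FS.Y a n b = 0)
    (u : V ⊗[k] H) (x : V ⊗[k] M) :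
    ∃ N : ℤ, ∀ n : ℤ, N ≤ n → YMmap (M := M) FS u n x = 0 := by
  induction x using TensorProduct.induction_on with
  | zero => exact ⟨0, fun n _ => map_zero _⟩
  | tmul b m =>
    obtain ⟨N, hN⟩ := htr u (b ⊗ₜ[k] (1 : H))
    refine ⟨N, fun n hn => ?_⟩
    rw [simple_as_phi (H := H) b m, YM_phi F FS hFS, hN n hn, map_zero]
  | add x y hx hy =>
    obtain ⟨N1, h1⟩ := hx
    obtain ⟨N2, h2⟩ := hy
    refine ⟨max N1 N2, fun n hn => ?_⟩
    rw [map_add, h1 n (le_trans (le_max_left _ _) hn),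
      h2 n (le_trans (le_max_right _ _) hn), add_zero]

theorem YM_vac (hFS : SmashChar H F FS)
    (hvac : ∀ (a : V ⊗[k] H) (n : ℤ), FS.Y FS.vac n a = if n = -1 then a else 0)
    (x : V ⊗[k] M) (n : ℤ) :
    YMmap (M := M) FS FS.vac n x = if n = -1 then x else 0 := by
  induction x using TensorProduct.induction_on with
  | zero => split <;> simp
  | tmul b m =>
    rw [simple_as_phi (H := H) b m, YM_phi F FS hFS, hvac]
    split <;> simp
  | add x y hx hy => rw [map_add, hx, hy]; split <;> simp

theorem YM_trans (hFS : SmashChar H F FS)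
    (h6 : ∀ (a b : V ⊗[k] H) (n : ℤ), FS.Y (FS.T a) n b = FS.T (FS.Y a n b) - FS.Y a n (FS.T b))
    (h7 : ∀ (a b : V ⊗[k] H) (n : ℤ), FS.Y (FS.T a) n b = (-n : ℤ) • FS.Y a (n - 1) b)
    (u : V ⊗[k] H) (x : V ⊗[k] M) (n : ℤ) :
    (MoD (M := M) F FS).sM (YMmap FS u n x) - YMmap FS u n ((MoD (M := M) F FS).sM x)
      = (-n : ℤ) • YMmap FS u (n - 1) x := by
  induction x using TensorProduct.induction_on with
  | zero => simp
  | tmul b m =>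
    rw [simple_as_phi (H := H) b m, YM_phi F FS hFS, sM_phi F FS hFS, sM_phi F FS hFS,
      YM_phi F FS hFS, YM_phi F FS hFS, ← map_sub, ← h6, h7, map_zsmul]
  | add x y hx hy =>
    simp only [map_add, smul_add, ← hx, ← hy]
    abel

theorem mcompLHS_tr (u v : V ⊗[k] H) (x : V ⊗[k] M) (p q : ℤ) (J : ℕ)
    (hJ : ∀ j : ℕ, J ≤ j → YMmap (M := M) FS v ((j : ℤ) - 1 - q) x = 0) :
    VModData.mcompLHS (MoD F FS) u v x p q
      = negOnePow q • ∑ j ∈ Finset.range J, ibinom (p + (j : ℤ)) j •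
          YMmap (M := M) FS u (-p - 1 - (j : ℤ)) (YMmap FS v ((j : ℤ) - 1 - q) x) := by
  unfold VModData.mcompLHS
  simp only [MoD_YM]
  congr 1
  refine finsum_eq_finset_sum_of_support_subset _ fun j hj => ?_
  simp only [Function.mem_support, ne_eq] at hj
  rw [Finset.mem_coe, Finset.mem_range]
  by_contra hmem
  exact hj (by rw [hJ j (le_of_not_gt hmem), map_zero, smul_zero])

theorem compLHS_tr (u v w : V ⊗[k] H) (p q : ℤ) (J : ℕ)
    (hJ : ∀ j : ℕ, J ≤ j → FS.Y v ((j : ℤ) - 1 - q) w = 0) :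
    FS.compLHS u v w p q = FS.compLHStr J u v w p q := by
  unfold VAData.compLHS VAData.compLHStr
  congr 1
  refine finsum_eq_finset_sum_of_support_subset _ fun j hj => ?_
  simp only [Function.mem_support, ne_eq] at hj
  rw [Finset.mem_coe, Finset.mem_range]
  by_contra hmem
  exact hj (by rw [hJ j (le_of_not_gt hmem), map_zero, smul_zero])

theorem toNat_bound {N q : ℤ} {j : ℕ} (hj : (N + 1 + q).toNat ≤ j) : N ≤ (j : ℤ) - 1 - q := by
  have h1 : (N + 1 + q : ℤ) ≤ ((N + 1 + q).toNat : ℤ) := Int.self_le_toNat _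
  have h2 : (((N + 1 + q).toNat : ℕ) : ℤ) ≤ (j : ℤ) := by exact_mod_cast hj
  omega

theorem mcompLHS_phi (hFS : SmashChar H F FS)
    (htr : ∀ a b : V ⊗[k] H, ∃ N : ℤ, ∀ n : ℤ, N ≤ n → FS.Y a n b = 0)
    (u v : V ⊗[k] H) (m0 : M) (w : V ⊗[k] H) (p q : ℤ) :
    VModData.mcompLHS (MoD (M := M) F FS) u v (PhiMap (V := V) m0 w) p q
      = PhiMap (V := V) m0 (FS.compLHS u v w p q) := by
  obtain ⟨N, hN⟩ := htr v w
  have hJ1 : ∀ j : ℕ, (N + 1 + q).toNat ≤ j → FS.Y v ((j : ℤ) - 1 - q) w = 0 :=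
    fun j hj => hN _ (toNat_bound hj)
  have hJ2 : ∀ j : ℕ, (N + 1 + q).toNat ≤ j →
      YMmap (M := M) FS v ((j : ℤ) - 1 - q) (PhiMap (V := V) m0 w) = 0 := by
    intro j hj; rw [YM_phi F FS hFS, hJ1 j hj, map_zero]
  rw [mcompLHS_tr F FS u v _ p q _ hJ2, compLHS_tr FS u v w p q _ hJ1]
  unfold VAData.compLHStr
  rw [map_zsmul, map_sum]
  congr 1
  refine Finset.sum_congr rfl fun j _ => ?_
  rw [map_zsmul, YM_phi F FS hFS, YM_phi F FS hFS]

theorem mcompRHS_phi (hFS : SmashChar H F FS) (u v : V ⊗[k] H) (m0 : M) (w : V ⊗[k] H)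
    (p q : ℤ) :
    VModData.mcompRHS FS (MoD (M := M) F FS) u v (PhiMap (V := V) m0 w) p q
      = PhiMap (V := V) m0 (FS.compRHS u v w p q) := by
  unfold VModData.mcompRHS VAData.compRHS
  simp only [MoD_YM]
  rw [YM_phi F FS hFS, map_zsmul]

theorem mcompLHS_add (hFS : SmashChar H F FS)
    (htr : ∀ a b : V ⊗[k] H, ∃ N : ℤ, ∀ n : ℤ, N ≤ n → FS.Y a n b = 0)
    (u v : V ⊗[k] H) (x y : V ⊗[k] M) (p q : ℤ) :
    VModData.mcompLHS (MoD F FS) u v (x + y) p q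
      = VModData.mcompLHS (MoD F FS) u v x p q + VModData.mcompLHS (MoD F FS) u v y p q := by
  obtain ⟨N1, h1⟩ := YM_trunc F FS hFS htr v x
  obtain ⟨N2, h2⟩ := YM_trunc F FS hFS htr v y
  have hx' : ∀ j : ℕ, (max N1 N2 + 1 + q).toNat ≤ j →
      YMmap (M := M) FS v ((j : ℤ) - 1 - q) x = 0 :=
    fun j hj => h1 _ (le_trans (le_max_left _ _) (toNat_bound hj))
  have hy' : ∀ j : ℕ, (max N1 N2 + 1 + q).toNat ≤ j →
      YMmap (M := M) FS v ((j : ℤ) - 1 - q) y = 0 :=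
    fun j hj => h2 _ (le_trans (le_max_right _ _) (toNat_bound hj))
  have hxy : ∀ j : ℕ, (max N1 N2 + 1 + q).toNat ≤ j →
      YMmap (M := M) FS v ((j : ℤ) - 1 - q) (x + y) = 0 := by
    intro j hj; rw [map_add, hx' j hj, hy' j hj, add_zero]
  rw [mcompLHS_tr F FS u v _ p q _ hxy, mcompLHS_tr F FS u v _ p q _ hx',
    mcompLHS_tr F FS u v _ p q _ hy', ← smul_add, ← Finset.sum_add_distrib]
  congr 1
  refine Finset.sum_congr rfl fun j _ => ?_
  rw [map_add, map_add, smul_add]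

theorem mcompRHS_add (u v : V ⊗[k] H) (x y : V ⊗[k] M) (p q : ℤ) :
    VModData.mcompRHS FS (MoD F FS) u v (x + y) p q
      = VModData.mcompRHS FS (MoD F FS) u v x p q
        + VModData.mcompRHS FS (MoD F FS) u v y p q := by
  unfold VModData.mcompRHS
  rw [map_add, smul_add]

theorem mcompLHS_zero (u v : V ⊗[k] H) (p q : ℤ) :
    VModData.mcompLHS (MoD (M := M) F FS) u v 0 p q = 0 := by
  rw [mcompLHS_tr F FS u v 0 p q 0 (fun j _ => map_zero _)]
  simp

theorem mcompRHS_zero (u v : V ⊗[k] H) (p q : ℤ) :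
    VModData.mcompRHS FS (MoD (M := M) F FS) u v 0 p q = 0 := by
  unfold VModData.mcompRHS
  rw [map_zero, smul_zero]

theorem module_assoc (hFS : SmashChar H F FS) (hFSla : FS.IsSLocalVA)
    (u v : V ⊗[k] H) (x : V ⊗[k] M) :
    ∃ N : ℕ, ∀ p q : ℤ, zwMul N (VModData.mcompLHS (MoD F FS) u v x) p q
      = zwMul N (VModData.mcompRHS FS (MoD F FS) u v x) p q := by
  have htr := hFSla.1.1.1
  induction x using TensorProduct.induction_on with
  | zero =>
    refine ⟨0, fun p q => ?_⟩
    rw [zwMul_congr (fun p q => mcompLHS_zero F FS u v p q) p q,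
      zwMul_congr (fun p q => mcompRHS_zero F FS u v p q) p q]
  | tmul b m =>
    obtain ⟨N, hN⟩ := hFSla.1.2 u v (b ⊗ₜ[k] (1 : H))
    refine ⟨N, fun p q => ?_⟩
    rw [show (b ⊗ₜ[k] m : V ⊗[k] M) = PhiMap (V := V) m (b ⊗ₜ[k] (1 : H)) from
      simple_as_phi b m]
    rw [zwMul_congr (fun p q => mcompLHS_phi F FS hFS htr u v m _ p q) p q,
      zwMul_congr (fun p q => mcompRHS_phi F FS hFS u v m _ p q) p q,
      zwMul_map (PhiMap (V := V) m) N (FS.compLHS u v (b ⊗ₜ[k] (1 : H))),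
      zwMul_map (PhiMap (V := V) m) N (FS.compRHS u v (b ⊗ₜ[k] (1 : H))), hN p q]
  | add x y hx hy =>
    obtain ⟨N1, h1⟩ := hx
    obtain ⟨N2, h2⟩ := hy
    refine ⟨max N1 N2, fun p q => ?_⟩
    rw [zwMul_congr (fun p q => mcompLHS_add F FS hFS htr u v x y p q) p q,
      zwMul_congr (fun p q => mcompRHS_add F FS u v x y p q) p q,
      zwMul_add, zwMul_add, zwMul_le (le_max_left N1 N2) h1 p q,
      zwMul_le (le_max_right N1 N2) h2 p q]

theorem mprodZW_phi (hFS : SmashChar H F FS) (u v : V ⊗[k] H) (m0 : M) (w : V ⊗[k] H)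
    (p q : ℤ) :
    VModData.mprodZW (MoD (M := M) F FS) u v (PhiMap (V := V) m0 w) p q
      = PhiMap (V := V) m0 (FS.prodZW u v w p q) := by
  unfold VModData.mprodZW VAData.prodZW
  simp only [MoD_YM]
  rw [YM_phi F FS hFS, YM_phi F FS hFS]

theorem mprodWZ_phi (hFS : SmashChar H F FS) (u v : V ⊗[k] H) (m0 : M) (w : V ⊗[k] H)
    (p q : ℤ) :
    VModData.mprodWZ (MoD (M := M) F FS) u v (PhiMap (V := V) m0 w) p q
      = PhiMap (V := V) m0 (FS.prodWZ u v w p q) := by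
  unfold VModData.mprodWZ VAData.prodWZ
  simp only [MoD_YM]
  rw [YM_phi F FS hFS, YM_phi F FS hFS]

theorem mprodZW_zero (u v : V ⊗[k] H) (p q : ℤ) :
    VModData.mprodZW (MoD (M := M) F FS) u v 0 p q = 0 := by
  simp [VModData.mprodZW, MoD_YM]

theorem mprodWZ_zero (u v : V ⊗[k] H) (p q : ℤ) :
    VModData.mprodWZ (MoD (M := M) F FS) u v 0 p q = 0 := by
  simp [VModData.mprodWZ, MoD_YM]

theorem mprodZW_add (u v : V ⊗[k] H) (x y : V ⊗[k] M) (p q : ℤ) :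
    VModData.mprodZW (MoD (M := M) F FS) u v (x + y) p q
      = VModData.mprodZW (MoD F FS) u v x p q + VModData.mprodZW (MoD F FS) u v y p q := by
  simp [VModData.mprodZW, MoD_YM, map_add]

theorem mprodWZ_add (u v : V ⊗[k] H) (x y : V ⊗[k] M) (p q : ℤ) :
    VModData.mprodWZ (MoD (M := M) F FS) u v (x + y) p q
      = VModData.mprodWZ (MoD F FS) u v x p q + VModData.mprodWZ (MoD F FS) u v y p q := by
  simp [VModData.mprodWZ, MoD_YM, map_add]

noncomputable def lamInner (a b c' : V) (n n' : ℤ) : H ⊗[k] H →ₗ[k] V :=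
  TensorProduct.lift (LinearMap.mk₂ k
    (fun x y => F.Y a n (F.Y (x • b) n' (y • c')))
    (fun x1 x2 y => by simp [add_smul, map_add])
    (fun c x y => by simp [smul_assoc, map_smul])
    (fun x y1 y2 => by simp [add_smul, map_add])
    (fun c x y => by simp [smul_assoc, map_smul]))

noncomputable def rhoInner (a b c' : V) (n n' : ℤ) : H ⊗[k] H →ₗ[k] V :=
  TensorProduct.lift (LinearMap.mk₂ k
    (fun x y => F.Y (x • b) n' (F.Y a n (y • c')))
    (fun x1 x2 y => by simp [add_smul, map_add])
    (fun c x y => by simp [smul_assoc, map_smul])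
    (fun x y1 y2 => by simp [add_smul, map_add])
    (fun c x y => by simp [smul_assoc, map_smul]))

noncomputable def LamMap (a b c' : V) (f' : H) (p q : ℤ) :
    (H ⊗[k] H) ⊗[k] H →ₗ[k] V ⊗[k] H :=
  TensorProduct.map (lamInner F a b c' (-p - 1) (-q - 1)) (LinearMap.mulRight k f')

noncomputable def RhoMap (a b c' : V) (f' : H) (p q : ℤ) :
    (H ⊗[k] H) ⊗[k] H →ₗ[k] V ⊗[k] H :=
  TensorProduct.map (rhoInner F a b c' (-p - 1) (-q - 1)) (LinearMap.mulRight k f')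

theorem lam_tmul (a b c' : V) (f' : H) (p q : ℤ) (x y z : H) :
    LamMap F a b c' f' p q ((x ⊗ₜ[k] y) ⊗ₜ[k] z)
      = (F.Y a (-p - 1) (F.Y (x • b) (-q - 1) (y • c'))) ⊗ₜ[k] (z * f') := by
  simp [LamMap, lamInner]

theorem rho_tmul (a b c' : V) (f' : H) (p q : ℤ) (x y z : H) :
    RhoMap F a b c' f' p q ((x ⊗ₜ[k] y) ⊗ₜ[k] z)
      = (F.Y (x • b) (-q - 1) (F.Y a (-p - 1) (y • c'))) ⊗ₜ[k] (z * f') := by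
  simp [RhoMap, rhoInner]

theorem lamrho_add (a b : V) {t1 t2 : (H ⊗[k] H) ⊗[k] H}
    (h1 : ∃ n₀ : ℕ, ∀ (c' : V) (f' : H) (p q : ℤ),
      zwMul n₀ (fun p q => LamMap F a b c' f' p q t1) p q
        = zwMul n₀ (fun p q => RhoMap F a b c' f' p q t1) p q)
    (h2 : ∃ n₀ : ℕ, ∀ (c' : V) (f' : H) (p q : ℤ),
      zwMul n₀ (fun p q => LamMap F a b c' f' p q t2) p q
        = zwMul n₀ (fun p q => RhoMap F a b c' f' p q t2) p q) :
    ∃ n₀ : ℕ, ∀ (c' : V) (f' : H) (p q : ℤ),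
      zwMul n₀ (fun p q => LamMap F a b c' f' p q (t1 + t2)) p q
        = zwMul n₀ (fun p q => RhoMap F a b c' f' p q (t1 + t2)) p q := by
  obtain ⟨n1, H1⟩ := h1
  obtain ⟨n2, H2⟩ := h2
  refine ⟨max n1 n2, fun c' f' p q => ?_⟩
  have e1 : ∀ p q : ℤ, LamMap F a b c' f' p q (t1 + t2)
      = LamMap F a b c' f' p q t1 + LamMap F a b c' f' p q t2 := fun p q => map_add _ _ _
  have e2 : ∀ p q : ℤ, RhoMap F a b c' f' p q (t1 + t2)
      = RhoMap F a b c' f' p q t1 + RhoMap F a b c' f' p q t2 := fun p q => map_add _ _ _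
  rw [zwMul_congr e1 p q, zwMul_congr e2 p q, zwMul_add, zwMul_add,
    zwMul_le (le_max_left n1 n2) (H1 c' f') p q,
    zwMul_le (le_max_right n1 n2) (H2 c' f') p q]

theorem lam_rho_local (hloc : ∀ a b : V, F.IsLocalPair a b) (a b : V)
    (t : (H ⊗[k] H) ⊗[k] H) :
    ∃ n₀ : ℕ, ∀ (c' : V) (f' : H) (p q : ℤ),
      zwMul n₀ (fun p q => LamMap F a b c' f' p q t) p q
        = zwMul n₀ (fun p q => RhoMap F a b c' f' p q t) p q := by
  induction t using TensorProduct.induction_on with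
  | zero =>
    refine ⟨0, fun c' f' p q => ?_⟩
    rw [zwMul_congr (fun p q => map_zero (LamMap F a b c' f' p q)) p q,
      zwMul_congr (fun p q => map_zero (RhoMap F a b c' f' p q)) p q]
  | add t1 t2 h1 h2 => exact lamrho_add F a b h1 h2
  | tmul s z =>
    induction s using TensorProduct.induction_on with
    | zero =>
      refine ⟨0, fun c' f' p q => ?_⟩
      rw [TensorProduct.zero_tmul]
      rw [zwMul_congr (fun p q => map_zero (LamMap F a b c' f' p q)) p q,
        zwMul_congr (fun p q => map_zero (RhoMap F a b c' f' p q)) p q]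
    | add s1 s2 hs1 hs2 =>
      rw [TensorProduct.add_tmul]
      exact lamrho_add F a b hs1 hs2
    | tmul x y =>
      obtain ⟨n₀, hl⟩ := hloc a (x • b)
      refine ⟨n₀, fun c' f' p q => ?_⟩
      have e1 : ∀ p q : ℤ, LamMap F a b c' f' p q ((x ⊗ₜ[k] y) ⊗ₜ[k] z)
          = ((TensorProduct.mk k V H).flip (z * f')) (F.prodZW a (x • b) (y • c') p q) := by
        intro p q
        rw [lam_tmul]
        simp [VAData.prodZW]
      have e2 : ∀ p q : ℤ, RhoMap F a b c' f' p q ((x ⊗ₜ[k] y) ⊗ₜ[k] z)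
          = ((TensorProduct.mk k V H).flip (z * f')) (F.prodWZ a (x • b) (y • c') p q) := by
        intro p q
        rw [rho_tmul]
        simp [VAData.prodWZ]
      rw [zwMul_congr e1 p q, zwMul_congr e2 p q,
        zwMul_map ((TensorProduct.mk k V H).flip (z * f')) n₀ (F.prodZW a (x • b) (y • c')),
        zwMul_map ((TensorProduct.mk k V H).flip (z * f')) n₀ (F.prodWZ a (x • b) (y • c')),
        hl (y • c') p q]

theorem theta_lam (hHF : IsHModuleFA H F) (a b c'' : V) (f'' : H) (p q : ℤ)
    (s : H ⊗[k] H) :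
    ThetaMap F a (-p - 1) (F.Y b (-q - 1) c'') f'' s
      = LamMap F a b c'' f'' p q ((LinearMap.rTensor H (Coalgebra.comul (R := k))) s) := by
  induction s using TensorProduct.induction_on with
  | zero => simp
  | add s t hs ht => simp only [map_add, hs, ht]
  | tmul x y =>
    rw [LinearMap.rTensor_tmul, theta_apply]
    obtain ⟨m, x1, x2, hrep⟩ := exists_fin_repr (Coalgebra.comul (R := k) x)
    rw [hHF.2.2 x b c'' (-q - 1) m x1 x2 hrep, map_sum, TensorProduct.sum_tmul, hrep,
      TensorProduct.sum_tmul, map_sum]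
    exact Finset.sum_congr rfl fun i _ => (lam_tmul F a b c'' f'' p q (x1 i) (x2 i) y).symm

theorem FSY_one (hFS : SmashChar H F FS) (v' : V) (n' : ℤ) (d : V ⊗[k] H) :
    FS.Y (v' ⊗ₜ[k] (1 : H)) n' d
      = TensorProduct.map (F.Y v' n' : Module.End k V) LinearMap.id d := by
  induction d using TensorProduct.induction_on with
  | zero => simp
  | add s t hs ht => simp only [map_add, hs, ht]
  | tmul c' f' =>
    rw [FSY_tmul F FS hFS, comul_one', theta_apply, one_smul, one_mul]
    simp

set_option synthInstance.maxHeartbeats 1000000 in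
theorem core_slocal (hF : F.IsVertexAlgebra) (hHF : IsHModuleFA H F)
    (hFS : SmashChar H F FS) (a b : V) (h g : H) (m : ℕ) (h1 h2 : Fin m → H)
    (hrep : Coalgebra.comul (R := k) h = ∑ i, h1 i ⊗ₜ[k] h2 i) :
    ∃ n₀ : ℕ, ∀ (w : V ⊗[k] H) (p q : ℤ),
      zwMul n₀ (FS.prodZW (a ⊗ₜ[k] h) (b ⊗ₜ[k] g) w) p q
        = ∑ i, zwMul n₀ (FS.prodWZ (a ⊗ₜ[k] (h2 i * g)) ((h1 i • b) ⊗ₜ[k] (1 : H)) w) p q := by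
  obtain ⟨n₀, hl⟩ := lam_rho_local F hF.2 a b
    ((LinearMap.rTensor H (Coalgebra.comul (R := k))) (Coalgebra.comul (R := k) h))
  refine ⟨n₀, fun w p q => ?_⟩
  induction w using TensorProduct.induction_on with
  | zero =>
    have e1 : ∀ p q : ℤ, FS.prodZW (a ⊗ₜ[k] h) (b ⊗ₜ[k] g) (0 : V ⊗[k] H) p q = 0 := by
      intro p q; simp [VAData.prodZW]
    have e2 : ∀ (i : Fin m) (p q : ℤ),
        FS.prodWZ (a ⊗ₜ[k] (h2 i * g)) ((h1 i • b) ⊗ₜ[k] (1 : H)) (0 : V ⊗[k] H) p q = 0 := by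
      intro i p q; simp [VAData.prodWZ]
    rw [zwMul_congr e1 p q, zwMul_zero_fn]
    exact (Finset.sum_eq_zero fun i _ => by
      rw [zwMul_congr (e2 i) p q, zwMul_zero_fn]).symm
  | add w1 w2 hw1 hw2 =>
    have e1 : ∀ p q : ℤ, FS.prodZW (a ⊗ₜ[k] h) (b ⊗ₜ[k] g) (w1 + w2) p q
        = FS.prodZW (a ⊗ₜ[k] h) (b ⊗ₜ[k] g) w1 p q
          + FS.prodZW (a ⊗ₜ[k] h) (b ⊗ₜ[k] g) w2 p q := by
      intro p q; simp [VAData.prodZW, map_add]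
    have e2 : ∀ (i : Fin m) (p q : ℤ),
        FS.prodWZ (a ⊗ₜ[k] (h2 i * g)) ((h1 i • b) ⊗ₜ[k] (1 : H)) (w1 + w2) p q
          = FS.prodWZ (a ⊗ₜ[k] (h2 i * g)) ((h1 i • b) ⊗ₜ[k] (1 : H)) w1 p q
            + FS.prodWZ (a ⊗ₜ[k] (h2 i * g)) ((h1 i • b) ⊗ₜ[k] (1 : H)) w2 p q := by
      intro i p q; simp [VAData.prodWZ, map_add]
    rw [zwMul_congr e1 p q, zwMul_add, hw1, hw2, ← Finset.sum_add_distrib]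
    exact Finset.sum_congr rfl fun i _ => by rw [zwMul_congr (e2 i) p q, zwMul_add]
  | tmul c f =>
    obtain ⟨mg, G1, G2, hg⟩ := exists_fin_repr (Coalgebra.comul (R := k) g)
    choose mR R S hRS using fun i : Fin m =>
      exists_fin_repr (Coalgebra.comul (R := k) (h2 i))
    have key1 : ∀ p q : ℤ, FS.prodZW (a ⊗ₜ[k] h) (b ⊗ₜ[k] g) (c ⊗ₜ[k] f) p q
        = ∑ l, LamMap F a b (G1 l • c) (G2 l * f) p q
            ((LinearMap.rTensor H (Coalgebra.comul (R := k))) (Coalgebra.comul (R := k) h)) := by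
      intro p q
      unfold VAData.prodZW
      rw [hFS.1 b c g f (-q - 1) mg G1 G2 hg, map_sum]
      exact Finset.sum_congr rfl fun l _ => by
        rw [FSY_tmul F FS hFS, theta_lam F hHF a b (G1 l • c) (G2 l * f) p q]
    have hT : (LinearMap.rTensor H (Coalgebra.comul (R := k))) (Coalgebra.comul (R := k) h)
        = ∑ i, ∑ j, (h1 i ⊗ₜ[k] R i j) ⊗ₜ[k] S i j := by
      have happ := DFunLike.congr_fun (Coalgebra.coassoc (R := k) (A := H)) h
      simp only [LinearMap.coe_comp, Function.comp_apply, LinearEquiv.coe_coe] at happ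
      have hback : (LinearMap.rTensor H (Coalgebra.comul (R := k))) (Coalgebra.comul (R := k) h)
          = (TensorProduct.assoc k H H H).symm
              ((LinearMap.lTensor H (Coalgebra.comul (R := k))) (Coalgebra.comul (R := k) h)) := by
        rw [← happ, LinearEquiv.symm_apply_apply]
      rw [hback, hrep, map_sum, map_sum]
      refine Finset.sum_congr rfl fun i _ => ?_
      rw [LinearMap.lTensor_tmul, hRS i, TensorProduct.tmul_sum, map_sum]
      exact Finset.sum_congr rfl fun j _ => TensorProduct.assoc_symm_tmul _ _ _
    have key2 : ∀ p q : ℤ,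
        (∑ i, FS.prodWZ (a ⊗ₜ[k] (h2 i * g)) ((h1 i • b) ⊗ₜ[k] (1 : H)) (c ⊗ₜ[k] f) p q)
          = ∑ l, RhoMap F a b (G1 l • c) (G2 l * f) p q
              ((LinearMap.rTensor H (Coalgebra.comul (R := k))) (Coalgebra.comul (R := k) h)) := by
      intro p q
      have hterm : ∀ i : Fin m,
          FS.prodWZ (a ⊗ₜ[k] (h2 i * g)) ((h1 i • b) ⊗ₜ[k] (1 : H)) (c ⊗ₜ[k] f) p q
            = ∑ j, ∑ l, (F.Y (h1 i • b) (-q - 1) (F.Y a (-p - 1) ((R i j * G1 l) • c)))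
                ⊗ₜ[k] ((S i j * G2 l) * f) := by
        intro i
        unfold VAData.prodWZ
        rw [FSY_tmul F FS hFS, FSY_one F FS hFS, comul_mul', hRS i, hg,
          Finset.sum_mul_sum]
        simp only [Algebra.TensorProduct.tmul_mul_tmul, map_sum, theta_apply,
          TensorProduct.map_tmul, LinearMap.id_coe, id_eq]
      calc (∑ i, FS.prodWZ (a ⊗ₜ[k] (h2 i * g)) ((h1 i • b) ⊗ₜ[k] (1 : H)) (c ⊗ₜ[k] f) p q)
          = ∑ i, ∑ j, ∑ l, (F.Y (h1 i • b) (-q - 1) (F.Y a (-p - 1) ((R i j * G1 l) • c)))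
              ⊗ₜ[k] ((S i j * G2 l) * f) := Finset.sum_congr rfl fun i _ => hterm i
        _ = ∑ i, ∑ l, ∑ j, (F.Y (h1 i • b) (-q - 1) (F.Y a (-p - 1) ((R i j * G1 l) • c)))
              ⊗ₜ[k] ((S i j * G2 l) * f) :=
            Finset.sum_congr rfl fun i _ => Finset.sum_comm
        _ = ∑ l, ∑ i, ∑ j, (F.Y (h1 i • b) (-q - 1) (F.Y a (-p - 1) ((R i j * G1 l) • c)))
              ⊗ₜ[k] ((S i j * G2 l) * f) := Finset.sum_comm
        _ = ∑ l, RhoMap F a b (G1 l • c) (G2 l * f) p q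
              ((LinearMap.rTensor H (Coalgebra.comul (R := k))) (Coalgebra.comul (R := k) h)) := by
            refine Finset.sum_congr rfl fun l _ => ?_
            rw [hT, map_sum]
            refine Finset.sum_congr rfl fun i _ => ?_
            rw [map_sum]
            refine Finset.sum_congr rfl fun j _ => ?_
            rw [rho_tmul, mul_smul, mul_assoc]
    calc zwMul n₀ (FS.prodZW (a ⊗ₜ[k] h) (b ⊗ₜ[k] g) (c ⊗ₜ[k] f)) p q
        = ∑ l, zwMul n₀ (fun p q => LamMap F a b (G1 l • c) (G2 l * f) p q
            ((LinearMap.rTensor H (Coalgebra.comul (R := k))) (Coalgebra.comul (R := k) h))) p q := by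
          rw [zwMul_congr key1 p q, zwMul_sum]
      _ = ∑ l, zwMul n₀ (fun p q => RhoMap F a b (G1 l • c) (G2 l * f) p q
            ((LinearMap.rTensor H (Coalgebra.comul (R := k))) (Coalgebra.comul (R := k) h))) p q :=
          Finset.sum_congr rfl fun l _ => hl (G1 l • c) (G2 l * f) p q
      _ = zwMul n₀ (fun p q => ∑ l, RhoMap F a b (G1 l • c) (G2 l * f) p q
            ((LinearMap.rTensor H (Coalgebra.comul (R := k))) (Coalgebra.comul (R := k) h))) p q :=
          (zwMul_sum _ _ _ _ _).symm
      _ = zwMul n₀ (fun p q => ∑ i,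
            FS.prodWZ (a ⊗ₜ[k] (h2 i * g)) ((h1 i • b) ⊗ₜ[k] (1 : H)) (c ⊗ₜ[k] f) p q) p q :=
          (zwMul_congr key2 p q).symm
      _ = ∑ i, zwMul n₀
            (FS.prodWZ (a ⊗ₜ[k] (h2 i * g)) ((h1 i • b) ⊗ₜ[k] (1 : H)) (c ⊗ₜ[k] f)) p q :=
          zwMul_sum _ _ _ _ _

end MainConstr




/-- If `M` is a left `H`-module and `V` an `H`-module vertex algebra,
then `V ⊗ M` with `Y_{V⊗M}(a#h,z)(b⊗m) = ∑ Y(a,z)(h₁b) ⊗ h₂m` and translation `s ⊗ Id`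
is a left module over the `S`-local vertex algebra `V#H`, satisfying in particular the
module `S`-locality
`(z-w)ⁿ Y(a#h,z)Y(b#g,w) = (z-w)ⁿ ∑ Y(h₁b#1,w)Y(a#h₂g,z)` on `V ⊗ M`. -/
theorem statement13 {k : Type*} [Field k] [CharZero k]
    {V : Type*} [AddCommGroup V] [Module k V]
    {H : Type*} [Ring H] [HopfAlgebra k H]
    [Module H V] [IsScalarTower k H V] [SMulCommClass k H V]
    {M : Type*} [AddCommGroup M] [Module k M]
    [Module H M] [IsScalarTower k H M] [SMulCommClass k H M]
    (F : VAData k V) (hF : F.IsVertexAlgebra) (hHF : IsHModuleFA H F)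
    (FS : VAData k (V ⊗[k] H)) (hFS : SmashChar H F FS) (hFSla : FS.IsSLocalVA) :
    ∃ Mo : VModData k (V ⊗[k] H) (V ⊗[k] M),
      (∀ (a : V) (h : H) (b : V) (x : M) (n : ℤ) (m : ℕ) (h1 h2 : Fin m → H),
        Coalgebra.comul (R := k) h = ∑ i, h1 i ⊗ₜ[k] h2 i →
        Mo.YM (a ⊗ₜ[k] h) n (b ⊗ₜ[k] x)
          = ∑ i, (F.Y a n (h1 i • b) : V) ⊗ₜ[k] (h2 i • x)) ∧
      (∀ (b : V) (x : M), Mo.sM (b ⊗ₜ[k] x) = (F.T b : V) ⊗ₜ[k] x) ∧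
      VModData.IsModule FS Mo ∧
      -- the explicit module S-locality
      (∀ (a b : V) (h g : H) (m : ℕ) (h1 h2 : Fin m → H),
        Coalgebra.comul (R := k) h = ∑ i, h1 i ⊗ₜ[k] h2 i →
        ∃ n : ℕ, ∀ (x : V ⊗[k] M) (p q : ℤ),
          zwMul n (VModData.mprodZW Mo (a ⊗ₜ[k] h) (b ⊗ₜ[k] g) x) p q
            = ∑ i, zwMul n
                (VModData.mprodWZ Mo (a ⊗ₜ[k] (h2 i * g)) ((h1 i • b) ⊗ₜ[k] (1 : H)) x)
                p q) ∧
      (∀ u w : V ⊗[k] H, VModData.IsSLocalModPair Mo u w) := by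
  refine ⟨MoD F FS, ?_, ?_, ⟨?_, ?_, ?_, ?_⟩, ?_, ?_⟩
  · -- explicit formula for YM on simple tensors
    intro a h b x n m h1 h2 hrep
    rw [MoD_YM, YM_tmul, hFS.1 a b h 1 n m h1 h2 hrep, TensorProduct.sum_tmul, map_sum]
    exact Finset.sum_congr rfl fun i _ => by rw [piMap_tmul, mul_one]
  · exact MoD_sM F FS
  · exact fun a x => YM_trunc F FS hFS hFSla.1.1.1 a x
  · exact fun x n => YM_vac F FS hFS hFSla.1.1.2.1 x n
  · exact fun a x n =>
      YM_trans F FS hFS hFSla.1.1.2.2.2.2.2.1 hFSla.1.1.2.2.2.2.2.2 a x n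
  · exact fun a b x => module_assoc F FS hFS hFSla a b x
  · -- the explicit module S-locality
    intro a b h g m h1 h2 hrep
    obtain ⟨n₀, hcore⟩ := core_slocal F FS hF hHF hFS a b h g m h1 h2 hrep
    refine ⟨n₀, fun x p q => ?_⟩
    induction x using TensorProduct.induction_on with
    | zero =>
      rw [zwMul_congr (fun p q => mprodZW_zero F FS _ _ p q) p q, zwMul_zero_fn]
      exact (Finset.sum_eq_zero fun i _ => by
        rw [zwMul_congr (fun p q => mprodWZ_zero F FS _ _ p q) p q, zwMul_zero_fn]).symm
    | tmul c m0 =>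
      rw [show (c ⊗ₜ[k] m0 : V ⊗[k] M) = PhiMap (V := V) m0 (c ⊗ₜ[k] (1 : H)) from
        simple_as_phi c m0]
      rw [zwMul_congr (fun p q => mprodZW_phi F FS hFS _ _ m0 _ p q) p q,
        zwMul_map (PhiMap (V := V) m0) n₀
          (FS.prodZW (a ⊗ₜ[k] h) (b ⊗ₜ[k] g) (c ⊗ₜ[k] (1 : H))) p q,
        hcore (c ⊗ₜ[k] (1 : H)) p q, map_sum]
      refine Finset.sum_congr rfl fun i _ => ?_
      rw [zwMul_congr (fun p q => mprodWZ_phi F FS hFS _ _ m0 _ p q) p q,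
        zwMul_map (PhiMap (V := V) m0) n₀
          (FS.prodWZ (a ⊗ₜ[k] (h2 i * g)) ((h1 i • b) ⊗ₜ[k] (1 : H)) (c ⊗ₜ[k] (1 : H))) p q]
    | add x y hx hy =>
      rw [zwMul_congr (fun p q => mprodZW_add F FS _ _ x y p q) p q, zwMul_add, hx, hy,
        ← Finset.sum_add_distrib]
      refine Finset.sum_congr rfl fun i _ => ?_
      rw [zwMul_congr (fun p q => mprodWZ_add F FS _ _ x y p q) p q, zwMul_add]
  · -- S-locality for all pairs
    intro u w
    obtain ⟨n, mm, A, B, hloc⟩ := hFSla.2 u w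
    refine ⟨n, mm, A, B, fun x p q => ?_⟩
    induction x using TensorProduct.induction_on with
    | zero =>
      rw [zwMul_congr (fun p q => mprodZW_zero F FS _ _ p q) p q, zwMul_zero_fn]
      exact (Finset.sum_eq_zero fun i _ => by
        rw [zwMul_congr (fun p q => mprodWZ_zero F FS _ _ p q) p q, zwMul_zero_fn]).symm
    | tmul c m0 =>
      rw [show (c ⊗ₜ[k] m0 : V ⊗[k] M) = PhiMap (V := V) m0 (c ⊗ₜ[k] (1 : H)) from
        simple_as_phi c m0]
      rw [zwMul_congr (fun p q => mprodZW_phi F FS hFS _ _ m0 _ p q) p q,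
        zwMul_map (PhiMap (V := V) m0) n (FS.prodZW u w (c ⊗ₜ[k] (1 : H))) p q,
        hloc (c ⊗ₜ[k] (1 : H)) p q, map_sum]
      refine Finset.sum_congr rfl fun i _ => ?_
      rw [zwMul_congr (fun p q => mprodWZ_phi F FS hFS _ _ m0 _ p q) p q,
        zwMul_map (PhiMap (V := V) m0) n (FS.prodWZ (A i) (B i) (c ⊗ₜ[k] (1 : H))) p q]
    | add x y hx hy =>
      rw [zwMul_congr (fun p q => mprodZW_add F FS _ _ x y p q) p q, zwMul_add, hx, hy,
        ← Finset.sum_add_distrib]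
      refine Finset.sum_congr rfl fun i _ => ?_
      rw [zwMul_congr (fun p q => mprodWZ_add F FS _ _ x y p q) p q, zwMul_add]

end HopfVA
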